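/- Fix R, C ≥ 1 and X ≥ 2. The map that sends each R×C matrix M with integer entries in {0,…,X} to the R×C array of shortest-path distances (d_{G_M}(a_j, b_k))_{1≤k≤R, 1≤j≤C} in its weighted grid embedding G_M is injective. -/

import Mathlib

/-- Vertices of the grid embedding: `a j` (top terminals), `b i` (right terminals),
`u i j` (grid intersections), `v i j` (subdivision vertex above `u i j`),
`w i j` (subdivision vertex to the right of `u i j`), `x i j` (shortcut vertices).
Indices are 1-based natural numbers; out-of-range vertices are isolated. -/
inductive GV : Type
  | a (j : ℕ)
  | b (i : ℕ)
  | u (i j : ℕ)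
  | v (i j : ℕ)
  | w (i j : ℕ)
  | x (i j : ℕ)
deriving DecidableEq

/-- One-directional edge weights of the grid embedding of a boolean `R × C` matrix `M`;
`⊤` means "no edge". -/
def dirW (R C : ℕ) (M : ℕ → ℕ → Bool) : GV → GV → ℕ∞
  | GV.a j, GV.v i' j' =>
      if i' = 1 ∧ j' = j ∧ 1 ≤ j ∧ j ≤ C then ((2 * j - 1 : ℕ) : ℕ∞) else ⊤
  | GV.v i j, GV.u i' j' =>
      if i' = i ∧ j' = j ∧ 1 ≤ i ∧ i ≤ R ∧ 1 ≤ j ∧ j ≤ C then 1 else ⊤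
  | GV.u i j, GV.v i' j' =>
      if i' = i + 1 ∧ j' = j ∧ 1 ≤ i ∧ i + 1 ≤ R ∧ 1 ≤ j ∧ j ≤ C then
        ((2 * j - 1 : ℕ) : ℕ∞) else ⊤
  | GV.u i j, GV.w i' j' =>
      if i' = i ∧ j' = j ∧ 1 ≤ i ∧ i ≤ R ∧ 1 ≤ j ∧ j ≤ C then 2 else ⊤
  | GV.w i j, GV.u i' j' =>
      if i' = i ∧ j' = j + 1 ∧ 1 ≤ i ∧ i ≤ R ∧ 1 ≤ j ∧ j + 1 ≤ C then
        ((2 * R - 2 : ℕ) : ℕ∞) else ⊤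
  | GV.w i j, GV.b i' =>
      if i' = i ∧ j = C ∧ 1 ≤ i ∧ i ≤ R ∧ 1 ≤ C then ((2 * R - 2 : ℕ) : ℕ∞) else ⊤
  | GV.v i j, GV.x i' j' =>
      if i' = i ∧ j' = j ∧ M i j = true ∧ 1 ≤ i ∧ i ≤ R ∧ 1 ≤ j ∧ j ≤ C then 1 else ⊤
  | GV.x i j, GV.w i' j' =>
      if i' = i ∧ j' = j ∧ M i j = true ∧ 1 ≤ i ∧ i ≤ R ∧ 1 ≤ j ∧ j ≤ C then 1 else ⊤
  | _, _ => ⊤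

/-- Symmetrization of a one-directional weight function. -/
noncomputable def symW {V : Type} (f : V → V → ℕ∞) : V → V → ℕ∞ := fun p q => min (f p q) (f q p)

/-- Edge weights of the grid embedding of a boolean matrix `M`. -/
noncomputable def gridW (R C : ℕ) (M : ℕ → ℕ → Bool) : GV → GV → ℕ∞ := symW (dirW R C M)

/-- One-directional edge weights of the weighted grid embedding of an `R × C` matrix `M`
with entries in `{0, …, X}`: the grid embedding of the all-ones boolean matrix with every
weight multiplied by `X²`, and the weight of each edge `(v i j, x i j)` increased by `M i j`. -/
def dirWt (R C X : ℕ) (M : ℕ → ℕ → ℕ) : GV → GV → ℕ∞ := fun p q =>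
  (X : ℕ∞) ^ 2 * dirW R C (fun _ _ => true) p q +
    (match p, q with
      | GV.v i j, GV.x i' j' => if i' = i ∧ j' = j then (M i j : ℕ∞) else 0
      | _, _ => 0)

/-- Edge weights of the weighted grid embedding of `M`. -/
noncomputable def wgridW (R C X : ℕ) (M : ℕ → ℕ → ℕ) : GV → GV → ℕ∞ := symW (dirWt R C X M)

/-- Edge weights of the mirrored grid `G'`: the (weighted, scaled by `X²`) grid embedding
with all shortcut vertices removed.  Mirroring is a weight-preserving graph isomorphism, so
the mirrored copy is represented by the same abstract graph. -/
noncomputable def mirW (R C X : ℕ) : GV → GV → ℕ∞ :=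
  fun p q => (X : ℕ∞) ^ 2 * gridW R C (fun _ _ => false) p q

/-- Total weight of a walk, given as its list of visited vertices. -/
def cost {V : Type} (W : V → V → ℕ∞) : List V → ℕ∞
  | p :: q :: l => W p q + cost W (q :: l)
  | _ => 0

/-- Shortest-path distance: the least total weight of a walk from `s` to `t`
(`⊤` if there is none; walks through a non-edge have cost `⊤`). -/
noncomputable def gdist {V : Type} (W : V → V → ℕ∞) (s t : V) : ℕ∞ :=
  sInf {c | ∃ l : List V, l.head? = some s ∧ l.getLast? = some t ∧ cost W l = c}

def pA (R j c i : ℕ) : ℤ := 2*(j:ℤ) + 2*(R:ℤ)*((j:ℤ)-(c:ℤ)) + 2*(c:ℤ)*((i:ℤ)-1)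
def pB (R j c i : ℕ) : ℤ := 2*(j:ℤ)*(i:ℤ) + 2*(R:ℤ)*((c:ℤ)-(j:ℤ))

def pot (R C X j k : ℕ) (m : ℤ) : GV → ℤ
  | GV.a c => (X:ℤ)^2 * (if c = j then 0 else if c < j then pA R j c 1 + 2*c - 2 else pB R j c 1 + 2*c - 1) + 0
  | GV.b i => (X:ℤ)^2 * (2*(j:ℤ)*(i:ℤ) + 2*(R:ℤ)*((C:ℤ)+1-(j:ℤ)) - 1) + (if i = k then m else 0)
  | GV.u i c => (X:ℤ)^2 * (if c ≤ j then pA R j c i else pB R j c i - 1) + (if i = k ∧ j < c then m else 0)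
  | GV.v i c => (X:ℤ)^2 * (if c ≤ j then pA R j c i - 1 else pB R j c i) + 0
  | GV.w i c => (X:ℤ)^2 * (if c < j then pA R j c i + min (2*(i:ℤ)-4) 1 else pB R j c i + 1) + (if i = k ∧ j ≤ c then m else 0)
  | GV.x i c => (X:ℤ)^2 * (if c < j then pA R j c i - 1 + min (2*(i:ℤ)-3) 1 else if c = j then pB R j c i else pB R j c i + 1) + (if i = k ∧ c = j then m else 0)

noncomputable def phi (R C X j k : ℕ) (m : ℤ) (p : GV) : ℕ∞ := ((pot R C X j k m p).toNat : ℕ∞)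

lemma le_phi_add {P Q : ℤ} {n : ℕ} (h1 : Q ≤ P + (n:ℤ)) (h2 : 0 ≤ P) :
    ((Q.toNat : ℕ) : ℕ∞) ≤ ((P.toNat : ℕ) : ℕ∞) + (n : ℕ∞) := by
  have : Q.toNat ≤ P.toNat + n := by omega
  exact_mod_cast this

lemma check (R C X j k : ℕ) (m : ℤ) (n : ℕ) (p q : GV)
    (h1 : pot R C X j k m q ≤ pot R C X j k m p + (n:ℤ))
    (h2 : 0 ≤ pot R C X j k m p) :
    phi R C X j k m q ≤ phi R C X j k m p + ((n:ℕ):ℕ∞) := le_phi_add h1 h2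

section Feas

variable {R C X j k : ℕ} {m : ℤ} {i c : ℕ}

lemma pot_nonneg_a (hR : 1 ≤ R) (hj1 : 1 ≤ j) : 0 ≤ pot R C X j k m (GV.a c) := by
  simp only [pot, pA, pB]
  rw [add_zero]
  refine mul_nonneg (sq_nonneg _) ?_
  split_ifs <;> push_cast <;> nlinarith []

lemma pot_nonneg_b (hm : 0 ≤ m) (hR : 1 ≤ R) (hj2 : j ≤ C) : 0 ≤ pot R C X j k m (GV.b i) := by
  simp only [pot, pA, pB]
  refine add_nonneg (mul_nonneg (sq_nonneg _) ?_) (by split_ifs <;> simp [hm])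
  push_cast; nlinarith []

lemma pot_nonneg_u (hm : 0 ≤ m) (hj1 : 1 ≤ j) (hi : 1 ≤ i) : 0 ≤ pot R C X j k m (GV.u i c) := by
  simp only [pot, pA, pB]
  refine add_nonneg (mul_nonneg (sq_nonneg _) ?_) (by split_ifs <;> simp [hm])
  split_ifs <;> push_cast <;> nlinarith []

lemma pot_nonneg_v (hj1 : 1 ≤ j) (hi : 1 ≤ i) : 0 ≤ pot R C X j k m (GV.v i c) := by
  simp only [pot, pA, pB]
  rw [add_zero]
  refine mul_nonneg (sq_nonneg _) ?_
  split_ifs <;> push_cast <;> nlinarith []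

lemma pot_nonneg_w (hm : 0 ≤ m) (hR : 1 ≤ R) (hj1 : 1 ≤ j) (hi : 1 ≤ i) :
    0 ≤ pot R C X j k m (GV.w i c) := by
  simp only [pot, pA, pB, min_def]
  refine add_nonneg (mul_nonneg (sq_nonneg _) ?_) (by split_ifs <;> simp [hm])
  split_ifs <;> push_cast <;> nlinarith []

lemma pot_nonneg_x (hm : 0 ≤ m) (hR : 1 ≤ R) (hj1 : 1 ≤ j) (hi : 1 ≤ i) :
    0 ≤ pot R C X j k m (GV.x i c) := by
  simp only [pot, pA, pB, min_def]
  refine add_nonneg (mul_nonneg (sq_nonneg _) ?_) (by split_ifs <;> simp [hm])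
  split_ifs <;> push_cast <;> nlinarith []

lemma brid {S E1 E2 w μ1 μ2 α : ℤ} (hS0 : 0 ≤ S) (hμ : μ1 ≤ μ2 + α) (hE : E1 ≤ E2 + w) :
    S*E1 + μ1 ≤ S*E2 + μ2 + (S*w + α) := by nlinarith

lemma brid2 {S X E1 E2 w μ1 μ2 α : ℤ} (hXS : X ≤ S) (hS0 : 0 ≤ S) (hμ1 : μ1 ≤ X)
    (hμ2 : 0 ≤ μ2) (hα : 0 ≤ α) (hE : E1 + 1 ≤ E2 + w) :
    S*E1 + μ1 ≤ S*E2 + μ2 + (S*w + α) := by nlinarith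

end Feas

section ZEdge
set_option maxHeartbeats 1600000

variable {R C X j k : ℕ} {m : ℤ} {i c : ℕ}

lemma z1 (hR : 1 ≤ R) (hXS : (X:ℤ) ≤ (X:ℤ)^2) (hm0 : 0 ≤ m) (hmX : m ≤ (X:ℤ)) (hj1 : 1 ≤ j) (hj2 : j ≤ C) (hc1 : 1 ≤ c) (hc2 : c ≤ C) :
    pot R C X j k m (GV.v 1 c) ≤ pot R C X j k m (GV.a c) + ((X:ℤ)^2*(2*(c:ℤ)-1) + 0) := by
  simp only [pot, pA, pB]
  split_ifs <;>
    first
      | (exfalso; omega)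
      | (refine brid (sq_nonneg _) (by omega) ?_;
         first
           | (simp only [min_def]; split_ifs <;> push_cast <;> nlinarith)
           | (push_cast; nlinarith)
           | nlinarith)
      | (refine brid2 hXS (sq_nonneg _) (by omega) (by omega) (by omega) ?_;
         first
           | (simp only [min_def]; split_ifs <;> push_cast <;> nlinarith)
           | (push_cast; nlinarith)
           | nlinarith)

lemma z2 (hR : 1 ≤ R) (hXS : (X:ℤ) ≤ (X:ℤ)^2) (hm0 : 0 ≤ m) (hmX : m ≤ (X:ℤ)) (hj1 : 1 ≤ j) (hj2 : j ≤ C) (hc1 : 1 ≤ c) (hc2 : c ≤ C) :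
    pot R C X j k m (GV.a c) ≤ pot R C X j k m (GV.v 1 c) + ((X:ℤ)^2*(2*(c:ℤ)-1) + 0) := by
  simp only [pot, pA, pB]
  split_ifs <;>
    first
      | (exfalso; omega)
      | (refine brid (sq_nonneg _) (by omega) ?_;
         first
           | (simp only [min_def]; split_ifs <;> push_cast <;> nlinarith)
           | (push_cast; nlinarith)
           | nlinarith)
      | (refine brid2 hXS (sq_nonneg _) (by omega) (by omega) (by omega) ?_;
         first
           | (simp only [min_def]; split_ifs <;> push_cast <;> nlinarith)
           | (push_cast; nlinarith)
           | nlinarith)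

lemma z3 (hR : 1 ≤ R) (hXS : (X:ℤ) ≤ (X:ℤ)^2) (hm0 : 0 ≤ m) (hmX : m ≤ (X:ℤ)) (hj1 : 1 ≤ j) (hj2 : j ≤ C) (hi1 : 1 ≤ i) (hi2 : i ≤ R) (hc1 : 1 ≤ c) (hc2 : c ≤ C) :
    pot R C X j k m (GV.u i c) ≤ pot R C X j k m (GV.v i c) + ((X:ℤ)^2*1 + 0) := by
  simp only [pot, pA, pB]
  split_ifs <;>
    first
      | (exfalso; omega)
      | (refine brid (sq_nonneg _) (by omega) ?_;
         first
           | (simp only [min_def]; split_ifs <;> push_cast <;> nlinarith)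
           | (push_cast; nlinarith)
           | nlinarith)
      | (refine brid2 hXS (sq_nonneg _) (by omega) (by omega) (by omega) ?_;
         first
           | (simp only [min_def]; split_ifs <;> push_cast <;> nlinarith)
           | (push_cast; nlinarith)
           | nlinarith)

lemma z4 (hR : 1 ≤ R) (hXS : (X:ℤ) ≤ (X:ℤ)^2) (hm0 : 0 ≤ m) (hmX : m ≤ (X:ℤ)) (hj1 : 1 ≤ j) (hj2 : j ≤ C) (hi1 : 1 ≤ i) (hi2 : i ≤ R) (hc1 : 1 ≤ c) (hc2 : c ≤ C) :
    pot R C X j k m (GV.v i c) ≤ pot R C X j k m (GV.u i c) + ((X:ℤ)^2*1 + 0) := by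
  simp only [pot, pA, pB]
  split_ifs <;>
    first
      | (exfalso; omega)
      | (refine brid (sq_nonneg _) (by omega) ?_;
         first
           | (simp only [min_def]; split_ifs <;> push_cast <;> nlinarith)
           | (push_cast; nlinarith)
           | nlinarith)
      | (refine brid2 hXS (sq_nonneg _) (by omega) (by omega) (by omega) ?_;
         first
           | (simp only [min_def]; split_ifs <;> push_cast <;> nlinarith)
           | (push_cast; nlinarith)
           | nlinarith)

lemma z5 (hR : 1 ≤ R) (hXS : (X:ℤ) ≤ (X:ℤ)^2) (hm0 : 0 ≤ m) (hmX : m ≤ (X:ℤ)) (hj1 : 1 ≤ j) (hj2 : j ≤ C) (hi1 : 1 ≤ i) (hi2 : i + 1 ≤ R) (hc1 : 1 ≤ c) (hc2 : c ≤ C) :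
    pot R C X j k m (GV.v (i+1) c) ≤ pot R C X j k m (GV.u i c) + ((X:ℤ)^2*(2*(c:ℤ)-1) + 0) := by
  simp only [pot, pA, pB]
  split_ifs <;>
    first
      | (exfalso; omega)
      | (refine brid (sq_nonneg _) (by omega) ?_;
         first
           | (simp only [min_def]; split_ifs <;> push_cast <;> nlinarith)
           | (push_cast; nlinarith)
           | nlinarith)
      | (refine brid2 hXS (sq_nonneg _) (by omega) (by omega) (by omega) ?_;
         first
           | (simp only [min_def]; split_ifs <;> push_cast <;> nlinarith)
           | (push_cast; nlinarith)
           | nlinarith)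

lemma z6 (hR : 1 ≤ R) (hXS : (X:ℤ) ≤ (X:ℤ)^2) (hm0 : 0 ≤ m) (hmX : m ≤ (X:ℤ)) (hj1 : 1 ≤ j) (hj2 : j ≤ C) (hi1 : 1 ≤ i) (hi2 : i + 1 ≤ R) (hc1 : 1 ≤ c) (hc2 : c ≤ C) :
    pot R C X j k m (GV.u i c) ≤ pot R C X j k m (GV.v (i+1) c) + ((X:ℤ)^2*(2*(c:ℤ)-1) + 0) := by
  simp only [pot, pA, pB]
  split_ifs <;>
    first
      | (exfalso; omega)
      | (refine brid (sq_nonneg _) (by omega) ?_;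
         first
           | (simp only [min_def]; split_ifs <;> push_cast <;> nlinarith)
           | (push_cast; nlinarith)
           | nlinarith)
      | (refine brid2 hXS (sq_nonneg _) (by omega) (by omega) (by omega) ?_;
         first
           | (simp only [min_def]; split_ifs <;> push_cast <;> nlinarith)
           | (push_cast; nlinarith)
           | nlinarith)

lemma z7 (hR : 1 ≤ R) (hXS : (X:ℤ) ≤ (X:ℤ)^2) (hm0 : 0 ≤ m) (hmX : m ≤ (X:ℤ)) (hj1 : 1 ≤ j) (hj2 : j ≤ C) (hi1 : 1 ≤ i) (hi2 : i ≤ R) (hc1 : 1 ≤ c) (hc2 : c ≤ C) :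
    pot R C X j k m (GV.w i c) ≤ pot R C X j k m (GV.u i c) + ((X:ℤ)^2*2 + 0) := by
  simp only [pot, pA, pB]
  split_ifs <;>
    first
      | (exfalso; omega)
      | (refine brid (sq_nonneg _) (by omega) ?_;
         first
           | (simp only [min_def]; split_ifs <;> push_cast <;> nlinarith)
           | (push_cast; nlinarith)
           | nlinarith)
      | (refine brid2 hXS (sq_nonneg _) (by omega) (by omega) (by omega) ?_;
         first
           | (simp only [min_def]; split_ifs <;> push_cast <;> nlinarith)
           | (push_cast; nlinarith)
           | nlinarith)

lemma z8 (hR : 1 ≤ R) (hXS : (X:ℤ) ≤ (X:ℤ)^2) (hm0 : 0 ≤ m) (hmX : m ≤ (X:ℤ)) (hj1 : 1 ≤ j) (hj2 : j ≤ C) (hi1 : 1 ≤ i) (hi2 : i ≤ R) (hc1 : 1 ≤ c) (hc2 : c ≤ C) :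
    pot R C X j k m (GV.u i c) ≤ pot R C X j k m (GV.w i c) + ((X:ℤ)^2*2 + 0) := by
  simp only [pot, pA, pB]
  split_ifs <;>
    first
      | (exfalso; omega)
      | (refine brid (sq_nonneg _) (by omega) ?_;
         first
           | (simp only [min_def]; split_ifs <;> push_cast <;> nlinarith)
           | (push_cast; nlinarith)
           | nlinarith)
      | (refine brid2 hXS (sq_nonneg _) (by omega) (by omega) (by omega) ?_;
         first
           | (simp only [min_def]; split_ifs <;> push_cast <;> nlinarith)
           | (push_cast; nlinarith)
           | nlinarith)

lemma z9 (hR : 1 ≤ R) (hXS : (X:ℤ) ≤ (X:ℤ)^2) (hm0 : 0 ≤ m) (hmX : m ≤ (X:ℤ)) (hj1 : 1 ≤ j) (hj2 : j ≤ C) (hi1 : 1 ≤ i) (hi2 : i ≤ R) (hc1 : 1 ≤ c) (hc2 : c + 1 ≤ C) :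
    pot R C X j k m (GV.u i (c+1)) ≤ pot R C X j k m (GV.w i c) + ((X:ℤ)^2*(2*(R:ℤ)-2) + 0) := by
  simp only [pot, pA, pB]
  split_ifs <;>
    first
      | (exfalso; omega)
      | (refine brid (sq_nonneg _) (by omega) ?_;
         first
           | (simp only [min_def]; split_ifs <;> push_cast <;> nlinarith)
           | (push_cast; nlinarith)
           | nlinarith)
      | (refine brid2 hXS (sq_nonneg _) (by omega) (by omega) (by omega) ?_;
         first
           | (simp only [min_def]; split_ifs <;> push_cast <;> nlinarith)
           | (push_cast; nlinarith)
           | nlinarith)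

lemma z10 (hR : 1 ≤ R) (hXS : (X:ℤ) ≤ (X:ℤ)^2) (hm0 : 0 ≤ m) (hmX : m ≤ (X:ℤ)) (hj1 : 1 ≤ j) (hj2 : j ≤ C) (hi1 : 1 ≤ i) (hi2 : i ≤ R) (hc1 : 1 ≤ c) (hc2 : c + 1 ≤ C) :
    pot R C X j k m (GV.w i c) ≤ pot R C X j k m (GV.u i (c+1)) + ((X:ℤ)^2*(2*(R:ℤ)-2) + 0) := by
  simp only [pot, pA, pB]
  split_ifs <;>
    first
      | (exfalso; omega)
      | (refine brid (sq_nonneg _) (by omega) ?_;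
         first
           | (simp only [min_def]; split_ifs <;> push_cast <;> nlinarith)
           | (push_cast; nlinarith)
           | nlinarith)
      | (refine brid2 hXS (sq_nonneg _) (by omega) (by omega) (by omega) ?_;
         first
           | (simp only [min_def]; split_ifs <;> push_cast <;> nlinarith)
           | (push_cast; nlinarith)
           | nlinarith)

lemma z11 (hR : 1 ≤ R) (hXS : (X:ℤ) ≤ (X:ℤ)^2) (hm0 : 0 ≤ m) (hmX : m ≤ (X:ℤ)) (hj1 : 1 ≤ j) (hj2 : j ≤ C) (hi1 : 1 ≤ i) (hi2 : i ≤ R) :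
    pot R C X j k m (GV.b i) ≤ pot R C X j k m (GV.w i C) + ((X:ℤ)^2*(2*(R:ℤ)-2) + 0) := by
  simp only [pot, pA, pB]
  split_ifs <;>
    first
      | (exfalso; omega)
      | (refine brid (sq_nonneg _) (by omega) ?_;
         first
           | (simp only [min_def]; split_ifs <;> push_cast <;> nlinarith)
           | (push_cast; nlinarith)
           | nlinarith)
      | (refine brid2 hXS (sq_nonneg _) (by omega) (by omega) (by omega) ?_;
         first
           | (simp only [min_def]; split_ifs <;> push_cast <;> nlinarith)
           | (push_cast; nlinarith)
           | nlinarith)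

lemma z12 (hR : 1 ≤ R) (hXS : (X:ℤ) ≤ (X:ℤ)^2) (hm0 : 0 ≤ m) (hmX : m ≤ (X:ℤ)) (hj1 : 1 ≤ j) (hj2 : j ≤ C) (hi1 : 1 ≤ i) (hi2 : i ≤ R) :
    pot R C X j k m (GV.w i C) ≤ pot R C X j k m (GV.b i) + ((X:ℤ)^2*(2*(R:ℤ)-2) + 0) := by
  simp only [pot, pA, pB]
  split_ifs <;>
    first
      | (exfalso; omega)
      | (refine brid (sq_nonneg _) (by omega) ?_;
         first
           | (simp only [min_def]; split_ifs <;> push_cast <;> nlinarith)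
           | (push_cast; nlinarith)
           | nlinarith)
      | (refine brid2 hXS (sq_nonneg _) (by omega) (by omega) (by omega) ?_;
         first
           | (simp only [min_def]; split_ifs <;> push_cast <;> nlinarith)
           | (push_cast; nlinarith)
           | nlinarith)

lemma z13 (hR : 1 ≤ R) (hXS : (X:ℤ) ≤ (X:ℤ)^2) (hm0 : 0 ≤ m) (hmX : m ≤ (X:ℤ)) (hj1 : 1 ≤ j) (hj2 : j ≤ C) {μ : ℤ} (hμ0 : 0 ≤ μ) (hμm : i = k → c = j → m ≤ μ) (hi1 : 1 ≤ i) (hi2 : i ≤ R) (hc1 : 1 ≤ c) (hc2 : c ≤ C) :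
    pot R C X j k m (GV.x i c) ≤ pot R C X j k m (GV.v i c) + ((X:ℤ)^2*1 + μ) := by
  simp only [pot, pA, pB]
  by_cases hik : i = k ∧ c = j
  · have hmm := hμm hik.1 hik.2
    split_ifs <;>
      first
        | (exfalso; omega)
        | (refine brid (sq_nonneg _) (by omega) ?_;
           first
             | (simp only [min_def]; split_ifs <;> push_cast <;> nlinarith)
             | (push_cast; nlinarith)
             | nlinarith)
        | (refine brid2 hXS (sq_nonneg _) (by omega) (by omega) (by omega) ?_;
           first
             | (simp only [min_def]; split_ifs <;> push_cast <;> nlinarith)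
             | (push_cast; nlinarith)
             | nlinarith)
  · split_ifs <;>
      first
        | (exfalso; omega)
        | (refine brid (sq_nonneg _) (by omega) ?_;
           first
             | (simp only [min_def]; split_ifs <;> push_cast <;> nlinarith)
             | (push_cast; nlinarith)
             | nlinarith)
        | (refine brid2 hXS (sq_nonneg _) (by omega) (by omega) (by omega) ?_;
           first
             | (simp only [min_def]; split_ifs <;> push_cast <;> nlinarith)
             | (push_cast; nlinarith)
             | nlinarith)

lemma z14 (hR : 1 ≤ R) (hXS : (X:ℤ) ≤ (X:ℤ)^2) (hm0 : 0 ≤ m) (hmX : m ≤ (X:ℤ)) (hj1 : 1 ≤ j) (hj2 : j ≤ C) {μ : ℤ} (hμ0 : 0 ≤ μ) (hi1 : 1 ≤ i) (hi2 : i ≤ R) (hc1 : 1 ≤ c) (hc2 : c ≤ C) :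
    pot R C X j k m (GV.v i c) ≤ pot R C X j k m (GV.x i c) + ((X:ℤ)^2*1 + μ) := by
  simp only [pot, pA, pB]
  split_ifs <;>
    first
      | (exfalso; omega)
      | (refine brid (sq_nonneg _) (by omega) ?_;
         first
           | (simp only [min_def]; split_ifs <;> push_cast <;> nlinarith)
           | (push_cast; nlinarith)
           | nlinarith)
      | (refine brid2 hXS (sq_nonneg _) (by omega) (by omega) (by omega) ?_;
         first
           | (simp only [min_def]; split_ifs <;> push_cast <;> nlinarith)
           | (push_cast; nlinarith)
           | nlinarith)

lemma z15 (hR : 1 ≤ R) (hXS : (X:ℤ) ≤ (X:ℤ)^2) (hm0 : 0 ≤ m) (hmX : m ≤ (X:ℤ)) (hj1 : 1 ≤ j) (hj2 : j ≤ C) (hi1 : 1 ≤ i) (hi2 : i ≤ R) (hc1 : 1 ≤ c) (hc2 : c ≤ C) :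
    pot R C X j k m (GV.w i c) ≤ pot R C X j k m (GV.x i c) + ((X:ℤ)^2*1 + 0) := by
  simp only [pot, pA, pB]
  split_ifs <;>
    first
      | (exfalso; omega)
      | (refine brid (sq_nonneg _) (by omega) ?_;
         first
           | (simp only [min_def]; split_ifs <;> push_cast <;> nlinarith)
           | (push_cast; nlinarith)
           | nlinarith)
      | (refine brid2 hXS (sq_nonneg _) (by omega) (by omega) (by omega) ?_;
         first
           | (simp only [min_def]; split_ifs <;> push_cast <;> nlinarith)
           | (push_cast; nlinarith)
           | nlinarith)

lemma z16 (hR : 1 ≤ R) (hXS : (X:ℤ) ≤ (X:ℤ)^2) (hm0 : 0 ≤ m) (hmX : m ≤ (X:ℤ)) (hj1 : 1 ≤ j) (hj2 : j ≤ C) (hi1 : 1 ≤ i) (hi2 : i ≤ R) (hc1 : 1 ≤ c) (hc2 : c ≤ C) :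
    pot R C X j k m (GV.x i c) ≤ pot R C X j k m (GV.w i c) + ((X:ℤ)^2*1 + 0) := by
  simp only [pot, pA, pB]
  split_ifs <;>
    first
      | (exfalso; omega)
      | (refine brid (sq_nonneg _) (by omega) ?_;
         first
           | (simp only [min_def]; split_ifs <;> push_cast <;> nlinarith)
           | (push_cast; nlinarith)
           | nlinarith)
      | (refine brid2 hXS (sq_nonneg _) (by omega) (by omega) (by omega) ?_;
         first
           | (simp only [min_def]; split_ifs <;> push_cast <;> nlinarith)
           | (push_cast; nlinarith)
           | nlinarith)

end ZEdge

set_option maxHeartbeats 1600000 in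
theorem phi_feasible (R C X j k : ℕ) (M : ℕ → ℕ → ℕ) (hR : 1 ≤ R) (hC : 1 ≤ C) (hX : 2 ≤ X)
    (hj1 : 1 ≤ j) (hj2 : j ≤ C) (hk1 : 1 ≤ k) (hk2 : k ≤ R)
    (hM : ∀ i c, 1 ≤ i → i ≤ R → 1 ≤ c → c ≤ C → M i c ≤ X) :
    ∀ p q, phi R C X j k (M k j) q ≤ phi R C X j k (M k j) p + wgridW R C X M p q := by
  have hS0 : ((X:ℕ∞)^2) ≠ 0 := by
    have : (X:ℕ∞) ≠ 0 := by exact_mod_cast (by omega : X ≠ 0)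
    positivity
  have hX' : (2:ℤ) ≤ (X:ℤ) := by exact_mod_cast hX
  have hXS : (X:ℤ) ≤ (X:ℤ)^2 := by nlinarith
  have hm0 : (0:ℤ) ≤ ((M k j :ℕ):ℤ) := Int.ofNat_nonneg _
  have hmX : ((M k j:ℕ):ℤ) ≤ (X:ℤ) := by exact_mod_cast hM k j hk1 hk2 hj1 hj2
  intro p q
  cases p <;> cases q <;>
    simp only [wgridW, symW, dirWt, dirW, ENat.mul_top hS0, top_add, add_top, add_zero,
      le_top, min_self, min_top_left, min_top_right, true_and]
  case a.v c0 i c =>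
    by_cases h : i = 1 ∧ c = c0 ∧ 1 ≤ c0 ∧ c0 ≤ C
    · rw [if_pos h]
      obtain ⟨he1, he2, hr⟩ := h
      rw [he1, he2]
      rw [show (X:ℕ∞)^2 * ((2*c0-1:ℕ):ℕ∞) = ((X^2*(2*c0-1):ℕ):ℕ∞) from by push_cast; ring]
      refine check R C X j k _ _ _ _ ?_ (pot_nonneg_a hR hj1)
      rw [show ((X^2*(2*c0-1):ℕ):ℤ) = (X:ℤ)^2*(2*(c0:ℤ)-1) from by rw [Nat.cast_mul, Nat.cast_pow, Nat.cast_sub (show 1 ≤ 2*c0 by omega)]; push_cast; ring]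
      have hz := z1 (k := k) hR hXS hm0 hmX hj1 hj2 hr.1 hr.2
      linarith [hz]
    · rw [if_neg h, ENat.mul_top hS0, add_top]; exact le_top
  case b.w i0 i c =>
    by_cases h : i0 = i ∧ c = C ∧ 1 ≤ i ∧ i ≤ R ∧ 1 ≤ C
    · rw [if_pos h]
      obtain ⟨he1, he2, hr⟩ := h
      rw [he1, he2]
      rw [show (X:ℕ∞)^2 * ((2*R-2:ℕ):ℕ∞) = ((X^2*(2*R-2):ℕ):ℕ∞) from by push_cast; ring]
      refine check R C X j k _ _ _ _ ?_ (pot_nonneg_b hm0 hR hj2)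
      rw [show ((X^2*(2*R-2):ℕ):ℤ) = (X:ℤ)^2*(2*(R:ℤ)-2) from by rw [Nat.cast_mul, Nat.cast_pow, Nat.cast_sub (show 2 ≤ 2*R by omega)]; push_cast; ring]
      have hz := z12 (k := k) hR hXS hm0 hmX hj1 hj2 hr.1 hr.2.1
      linarith [hz]
    · rw [if_neg h, ENat.mul_top hS0, add_top]; exact le_top
  case u.v i c i2 c2 =>
    rw [← min_add_add_left]
    refine le_min ?_ ?_
    · by_cases h : i2 = i + 1 ∧ c2 = c ∧ 1 ≤ i ∧ i + 1 ≤ R ∧ 1 ≤ c ∧ c ≤ C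
      · rw [if_pos h]
        obtain ⟨he1, he2, hr⟩ := h
        rw [he1, he2]
        rw [show (X:ℕ∞)^2 * ((2*c-1:ℕ):ℕ∞) = ((X^2*(2*c-1):ℕ):ℕ∞) from by push_cast; ring]
        refine check R C X j k _ _ _ _ ?_ (pot_nonneg_u hm0 hj1 hr.1)
        rw [show ((X^2*(2*c-1):ℕ):ℤ) = (X:ℤ)^2*(2*(c:ℤ)-1) from by rw [Nat.cast_mul, Nat.cast_pow, Nat.cast_sub (show 1 ≤ 2*c by omega)]; push_cast; ring]
        have hz := z5 (k := k) hR hXS hm0 hmX hj1 hj2 hr.1 hr.2.1 hr.2.2.1 hr.2.2.2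
        linarith [hz]
      · rw [if_neg h, ENat.mul_top hS0, add_top]; exact le_top
    · by_cases h : i = i2 ∧ c = c2 ∧ 1 ≤ i2 ∧ i2 ≤ R ∧ 1 ≤ c2 ∧ c2 ≤ C
      · rw [if_pos h]
        obtain ⟨he1, he2, hr⟩ := h
        rw [he1, he2]
        rw [mul_one, show ((X:ℕ∞)^2) = ((X^2:ℕ):ℕ∞) from by push_cast; ring]
        refine check R C X j k _ _ _ _ ?_ (pot_nonneg_u hm0 hj1 hr.1)
        rw [show ((X^2:ℕ):ℤ) = (X:ℤ)^2*1 from by push_cast; ring]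
        have hz := z4 (k := k) hR hXS hm0 hmX hj1 hj2 hr.1 hr.2.1 hr.2.2.1 hr.2.2.2
        linarith [hz]
      · rw [if_neg h, ENat.mul_top hS0, add_top]; exact le_top
  case v.u i c i2 c2 =>
    rw [← min_add_add_left]
    refine le_min ?_ ?_
    · by_cases h : i2 = i ∧ c2 = c ∧ 1 ≤ i ∧ i ≤ R ∧ 1 ≤ c ∧ c ≤ C
      · rw [if_pos h]
        obtain ⟨he1, he2, hr⟩ := h
        rw [he1, he2]
        rw [mul_one, show ((X:ℕ∞)^2) = ((X^2:ℕ):ℕ∞) from by push_cast; ring]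
        refine check R C X j k _ _ _ _ ?_ (pot_nonneg_v hj1 hr.1)
        rw [show ((X^2:ℕ):ℤ) = (X:ℤ)^2*1 from by push_cast; ring]
        have hz := z3 (k := k) hR hXS hm0 hmX hj1 hj2 hr.1 hr.2.1 hr.2.2.1 hr.2.2.2
        linarith [hz]
      · rw [if_neg h, ENat.mul_top hS0, add_top]; exact le_top
    · by_cases h : i = i2 + 1 ∧ c = c2 ∧ 1 ≤ i2 ∧ i2 + 1 ≤ R ∧ 1 ≤ c2 ∧ c2 ≤ C
      · rw [if_pos h]
        obtain ⟨he1, he2, hr⟩ := h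
        rw [he1, he2]
        rw [show (X:ℕ∞)^2 * ((2*c2-1:ℕ):ℕ∞) = ((X^2*(2*c2-1):ℕ):ℕ∞) from by push_cast; ring]
        refine check R C X j k _ _ _ _ ?_ (pot_nonneg_v hj1 (by omega : 1 ≤ i2 + 1))
        rw [show ((X^2*(2*c2-1):ℕ):ℤ) = (X:ℤ)^2*(2*(c2:ℤ)-1) from by rw [Nat.cast_mul, Nat.cast_pow, Nat.cast_sub (show 1 ≤ 2*c2 by omega)]; push_cast; ring]
        have hz := z6 (k := k) hR hXS hm0 hmX hj1 hj2 hr.1 hr.2.1 hr.2.2.1 hr.2.2.2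
        linarith [hz]
      · rw [if_neg h, ENat.mul_top hS0, add_top]; exact le_top
  case u.w i c i2 c2 =>
    rw [← min_add_add_left]
    refine le_min ?_ ?_
    · by_cases h : i2 = i ∧ c2 = c ∧ 1 ≤ i ∧ i ≤ R ∧ 1 ≤ c ∧ c ≤ C
      · rw [if_pos h]
        obtain ⟨he1, he2, hr⟩ := h
        rw [he1, he2]
        rw [show (X:ℕ∞)^2 * (2:ℕ∞) = ((X^2*2:ℕ):ℕ∞) from by push_cast; ring]
        refine check R C X j k _ _ _ _ ?_ (pot_nonneg_u hm0 hj1 hr.1)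
        rw [show ((X^2*2:ℕ):ℤ) = (X:ℤ)^2*2 from by push_cast; ring]
        have hz := z7 (k := k) hR hXS hm0 hmX hj1 hj2 hr.1 hr.2.1 hr.2.2.1 hr.2.2.2
        linarith [hz]
      · rw [if_neg h, ENat.mul_top hS0, add_top]; exact le_top
    · by_cases h : i = i2 ∧ c = c2 + 1 ∧ 1 ≤ i2 ∧ i2 ≤ R ∧ 1 ≤ c2 ∧ c2 + 1 ≤ C
      · rw [if_pos h]
        obtain ⟨he1, he2, hr⟩ := h
        rw [he1, he2]
        rw [show (X:ℕ∞)^2 * ((2*R-2:ℕ):ℕ∞) = ((X^2*(2*R-2):ℕ):ℕ∞) from by push_cast; ring]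
        refine check R C X j k _ _ _ _ ?_ (pot_nonneg_u hm0 hj1 hr.1)
        rw [show ((X^2*(2*R-2):ℕ):ℤ) = (X:ℤ)^2*(2*(R:ℤ)-2) from by rw [Nat.cast_mul, Nat.cast_pow, Nat.cast_sub (show 2 ≤ 2*R by omega)]; push_cast; ring]
        have hz := z10 (k := k) hR hXS hm0 hmX hj1 hj2 hr.1 hr.2.1 hr.2.2.1 hr.2.2.2
        linarith [hz]
      · rw [if_neg h, ENat.mul_top hS0, add_top]; exact le_top
  case w.u i c i2 c2 =>
    rw [← min_add_add_left]
    refine le_min ?_ ?_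
    · by_cases h : i2 = i ∧ c2 = c + 1 ∧ 1 ≤ i ∧ i ≤ R ∧ 1 ≤ c ∧ c + 1 ≤ C
      · rw [if_pos h]
        obtain ⟨he1, he2, hr⟩ := h
        rw [he1, he2]
        rw [show (X:ℕ∞)^2 * ((2*R-2:ℕ):ℕ∞) = ((X^2*(2*R-2):ℕ):ℕ∞) from by push_cast; ring]
        refine check R C X j k _ _ _ _ ?_ (pot_nonneg_w hm0 hR hj1 hr.1)
        rw [show ((X^2*(2*R-2):ℕ):ℤ) = (X:ℤ)^2*(2*(R:ℤ)-2) from by rw [Nat.cast_mul, Nat.cast_pow, Nat.cast_sub (show 2 ≤ 2*R by omega)]; push_cast; ring]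
        have hz := z9 (k := k) hR hXS hm0 hmX hj1 hj2 hr.1 hr.2.1 hr.2.2.1 hr.2.2.2
        linarith [hz]
      · rw [if_neg h, ENat.mul_top hS0, add_top]; exact le_top
    · by_cases h : i = i2 ∧ c = c2 ∧ 1 ≤ i2 ∧ i2 ≤ R ∧ 1 ≤ c2 ∧ c2 ≤ C
      · rw [if_pos h]
        obtain ⟨he1, he2, hr⟩ := h
        rw [he1, he2]
        rw [show (X:ℕ∞)^2 * (2:ℕ∞) = ((X^2*2:ℕ):ℕ∞) from by push_cast; ring]
        refine check R C X j k _ _ _ _ ?_ (pot_nonneg_w hm0 hR hj1 hr.1)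
        rw [show ((X^2*2:ℕ):ℤ) = (X:ℤ)^2*2 from by push_cast; ring]
        have hz := z8 (k := k) hR hXS hm0 hmX hj1 hj2 hr.1 hr.2.1 hr.2.2.1 hr.2.2.2
        linarith [hz]
      · rw [if_neg h, ENat.mul_top hS0, add_top]; exact le_top
  case w.b i c i2 =>
    by_cases h : i2 = i ∧ c = C ∧ 1 ≤ i ∧ i ≤ R ∧ 1 ≤ C
    · rw [if_pos h]
      obtain ⟨he1, he2, hr⟩ := h
      rw [he1, he2]
      rw [show (X:ℕ∞)^2 * ((2*R-2:ℕ):ℕ∞) = ((X^2*(2*R-2):ℕ):ℕ∞) from by push_cast; ring]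
      refine check R C X j k _ _ _ _ ?_ (pot_nonneg_w hm0 hR hj1 hr.1)
      rw [show ((X^2*(2*R-2):ℕ):ℤ) = (X:ℤ)^2*(2*(R:ℤ)-2) from by rw [Nat.cast_mul, Nat.cast_pow, Nat.cast_sub (show 2 ≤ 2*R by omega)]; push_cast; ring]
      have hz := z11 (k := k) hR hXS hm0 hmX hj1 hj2 hr.1 hr.2.1
      linarith [hz]
    · rw [if_neg h, ENat.mul_top hS0, add_top]; exact le_top
  case v.x i c i2 c2 =>
    by_cases h : i2 = i ∧ c2 = c ∧ 1 ≤ i ∧ i ≤ R ∧ 1 ≤ c ∧ c ≤ C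
    · rw [if_pos h]
      obtain ⟨he1, he2, hr⟩ := h
      rw [he1, he2]
      rw [if_pos (show i = i ∧ c = c from ⟨rfl, rfl⟩)]
      rw [mul_one, show ((X:ℕ∞)^2 + ((M i c:ℕ):ℕ∞)) = ((X^2 + M i c:ℕ):ℕ∞) from by push_cast; ring]
      refine check R C X j k _ _ _ _ ?_ (pot_nonneg_v hj1 hr.1)
      rw [show ((X^2 + M i c:ℕ):ℤ) = (X:ℤ)^2*1 + ((M i c:ℕ):ℤ) from by push_cast; ring]
      have hz := z13 (k := k) hR hXS hm0 hmX hj1 hj2 (Int.ofNat_nonneg (M i c)) (fun h1 h2 => by rw [h1, h2]) hr.1 hr.2.1 hr.2.2.1 hr.2.2.2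
      linarith [hz]
    · rw [if_neg h, ENat.mul_top hS0, top_add, add_top]; exact le_top
  case x.v i c i2 c2 =>
    by_cases h : i = i2 ∧ c = c2 ∧ 1 ≤ i2 ∧ i2 ≤ R ∧ 1 ≤ c2 ∧ c2 ≤ C
    · rw [if_pos h]
      obtain ⟨he1, he2, hr⟩ := h
      rw [he1, he2]
      rw [if_pos (show i2 = i2 ∧ c2 = c2 from ⟨rfl, rfl⟩)]
      rw [mul_one, show ((X:ℕ∞)^2 + ((M i2 c2:ℕ):ℕ∞)) = ((X^2 + M i2 c2:ℕ):ℕ∞) from by push_cast; ring]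
      refine check R C X j k _ _ _ _ ?_ (pot_nonneg_x hm0 hR hj1 hr.1)
      rw [show ((X^2 + M i2 c2:ℕ):ℤ) = (X:ℤ)^2*1 + ((M i2 c2:ℕ):ℤ) from by push_cast; ring]
      have hz := z14 (k := k) hR hXS hm0 hmX hj1 hj2 (Int.ofNat_nonneg (M i2 c2)) hr.1 hr.2.1 hr.2.2.1 hr.2.2.2
      linarith [hz]
    · rw [if_neg h, ENat.mul_top hS0, top_add, add_top]; exact le_top
  case x.w i c i2 c2 =>
    by_cases h : i2 = i ∧ c2 = c ∧ 1 ≤ i ∧ i ≤ R ∧ 1 ≤ c ∧ c ≤ C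
    · rw [if_pos h]
      obtain ⟨he1, he2, hr⟩ := h
      rw [he1, he2]
      rw [mul_one, show ((X:ℕ∞)^2) = ((X^2:ℕ):ℕ∞) from by push_cast; ring]
      refine check R C X j k _ _ _ _ ?_ (pot_nonneg_x hm0 hR hj1 hr.1)
      rw [show ((X^2:ℕ):ℤ) = (X:ℤ)^2*1 from by push_cast; ring]
      have hz := z15 (k := k) hR hXS hm0 hmX hj1 hj2 hr.1 hr.2.1 hr.2.2.1 hr.2.2.2
      linarith [hz]
    · rw [if_neg h, ENat.mul_top hS0, add_top]; exact le_top
  case w.x i c i2 c2 =>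
    by_cases h : i = i2 ∧ c = c2 ∧ 1 ≤ i2 ∧ i2 ≤ R ∧ 1 ≤ c2 ∧ c2 ≤ C
    · rw [if_pos h]
      obtain ⟨he1, he2, hr⟩ := h
      rw [he1, he2]
      rw [mul_one, show ((X:ℕ∞)^2) = ((X^2:ℕ):ℕ∞) from by push_cast; ring]
      refine check R C X j k _ _ _ _ ?_ (pot_nonneg_w hm0 hR hj1 hr.1)
      rw [show ((X^2:ℕ):ℤ) = (X:ℤ)^2*1 from by push_cast; ring]
      have hz := z16 (k := k) hR hXS hm0 hmX hj1 hj2 hr.1 hr.2.1 hr.2.2.1 hr.2.2.2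
      linarith [hz]
    · rw [if_neg h, ENat.mul_top hS0, add_top]; exact le_top
  case v.a i c c0 =>
    by_cases h : i = 1 ∧ c = c0 ∧ 1 ≤ c0 ∧ c0 ≤ C
    · rw [if_pos h]
      obtain ⟨he1, he2, hr⟩ := h
      rw [he1, he2]
      rw [show (X:ℕ∞)^2 * ((2*c0-1:ℕ):ℕ∞) = ((X^2*(2*c0-1):ℕ):ℕ∞) from by push_cast; ring]
      refine check R C X j k _ _ _ _ ?_ (pot_nonneg_v hj1 le_rfl)
      rw [show ((X^2*(2*c0-1):ℕ):ℤ) = (X:ℤ)^2*(2*(c0:ℤ)-1) from by rw [Nat.cast_mul, Nat.cast_pow, Nat.cast_sub (show 1 ≤ 2*c0 by omega)]; push_cast; ring]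
      have hz := z2 (k := k) hR hXS hm0 hmX hj1 hj2 hr.1 hr.2
      linarith [hz]
    · rw [if_neg h, ENat.mul_top hS0, add_top]; exact le_top

section WEdge

variable {R C X : ℕ} {M : ℕ → ℕ → ℕ}

lemma hS0' (hX : 2 ≤ X) : ((X:ℕ∞)^2) ≠ 0 := by
  have : (X:ℕ∞) ≠ 0 := by exact_mod_cast (by omega : X ≠ 0)
  positivity

lemma Wav (hX : 2 ≤ X) {j : ℕ} (h1 : 1 ≤ j) (h2 : j ≤ C) :
    wgridW R C X M (GV.a j) (GV.v 1 j) = ((X^2*(2*j-1) : ℕ) : ℕ∞) := by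
  simp only [wgridW, symW, dirWt, dirW, ENat.mul_top (hS0' hX), top_add, add_top, add_zero,
    min_top_right, min_top_left, true_and]
  rw [if_pos ⟨h1, h2⟩]
  first
    | (push_cast; ring1)
    | (split_ifs with hh
       · exact absurd hh (by rintro ⟨h5, -⟩; omega)
       · simp only [ENat.mul_top (hS0' hX), min_top_right, min_top_left, add_zero]; push_cast; ring1)
    | (simp only [ENat.mul_top (hS0' hX), min_top_right, min_top_left, add_zero]; push_cast; ring1)

lemma Wvu (hX : 2 ≤ X) {i j : ℕ} (h1 : 1 ≤ i) (h2 : i ≤ R) (h3 : 1 ≤ j) (h4 : j ≤ C) :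
    wgridW R C X M (GV.v i j) (GV.u i j) = ((X^2 : ℕ) : ℕ∞) := by
  simp only [wgridW, symW, dirWt, dirW, ENat.mul_top (hS0' hX), top_add, add_top, add_zero,
    min_top_right, min_top_left, true_and]
  rw [if_pos ⟨h1, h2, h3, h4⟩]
  first
    | (push_cast; ring1)
    | (split_ifs with hh
       · exact absurd hh (by rintro ⟨h5, -⟩; omega)
       · simp only [ENat.mul_top (hS0' hX), min_top_right, min_top_left, add_zero]; push_cast; ring1)
    | (simp only [ENat.mul_top (hS0' hX), min_top_right, min_top_left, add_zero]; push_cast; ring1)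

lemma Wuv (hX : 2 ≤ X) {i j : ℕ} (h1 : 1 ≤ i) (h2 : i + 1 ≤ R) (h3 : 1 ≤ j) (h4 : j ≤ C) :
    wgridW R C X M (GV.u i j) (GV.v (i+1) j) = ((X^2*(2*j-1) : ℕ) : ℕ∞) := by
  simp only [wgridW, symW, dirWt, dirW, ENat.mul_top (hS0' hX), top_add, add_top, add_zero,
    min_top_right, min_top_left, true_and]
  rw [if_pos ⟨h1, h2, h3, h4⟩]
  first
    | (push_cast; ring1)
    | (split_ifs with hh
       · exact absurd hh (by rintro ⟨h5, -⟩; omega)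
       · simp only [ENat.mul_top (hS0' hX), min_top_right, min_top_left, add_zero]; push_cast; ring1)
    | (simp only [ENat.mul_top (hS0' hX), min_top_right, min_top_left, add_zero]; push_cast; ring1)

lemma Wvx (hX : 2 ≤ X) {i j : ℕ} (h1 : 1 ≤ i) (h2 : i ≤ R) (h3 : 1 ≤ j) (h4 : j ≤ C) :
    wgridW R C X M (GV.v i j) (GV.x i j) = ((X^2 + M i j : ℕ) : ℕ∞) := by
  simp only [wgridW, symW, dirWt, dirW, ENat.mul_top (hS0' hX), top_add, add_top, add_zero,
    min_top_right, min_top_left, true_and]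
  rw [if_pos ⟨h1, h2, h3, h4⟩]
  first
    | (push_cast; ring1)
    | (split_ifs with hh
       · exact absurd hh (by rintro ⟨h5, -⟩; omega)
       · simp only [ENat.mul_top (hS0' hX), min_top_right, min_top_left, add_zero]; push_cast; ring1)
    | (simp only [ENat.mul_top (hS0' hX), min_top_right, min_top_left, add_zero]; push_cast; ring1)

lemma Wxw (hX : 2 ≤ X) {i j : ℕ} (h1 : 1 ≤ i) (h2 : i ≤ R) (h3 : 1 ≤ j) (h4 : j ≤ C) :
    wgridW R C X M (GV.x i j) (GV.w i j) = ((X^2 : ℕ) : ℕ∞) := by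
  simp only [wgridW, symW, dirWt, dirW, ENat.mul_top (hS0' hX), top_add, add_top, add_zero,
    min_top_right, min_top_left, true_and]
  rw [if_pos ⟨h1, h2, h3, h4⟩]
  first
    | (push_cast; ring1)
    | (split_ifs with hh
       · exact absurd hh (by rintro ⟨h5, -⟩; omega)
       · simp only [ENat.mul_top (hS0' hX), min_top_right, min_top_left, add_zero]; push_cast; ring1)
    | (simp only [ENat.mul_top (hS0' hX), min_top_right, min_top_left, add_zero]; push_cast; ring1)

lemma Wuw (hX : 2 ≤ X) {i j : ℕ} (h1 : 1 ≤ i) (h2 : i ≤ R) (h3 : 1 ≤ j) (h4 : j ≤ C) :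
    wgridW R C X M (GV.u i j) (GV.w i j) = ((X^2*2 : ℕ) : ℕ∞) := by
  simp only [wgridW, symW, dirWt, dirW, ENat.mul_top (hS0' hX), top_add, add_top, add_zero,
    min_top_right, min_top_left, true_and]
  rw [if_pos ⟨h1, h2, h3, h4⟩]
  first
    | (push_cast; ring1)
    | (split_ifs with hh
       · exact absurd hh (by rintro ⟨h5, -⟩; omega)
       · simp only [ENat.mul_top (hS0' hX), min_top_right, min_top_left, add_zero]; push_cast; ring1)
    | (simp only [ENat.mul_top (hS0' hX), min_top_right, min_top_left, add_zero]; push_cast; ring1)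

lemma Wwu (hX : 2 ≤ X) {i j : ℕ} (h1 : 1 ≤ i) (h2 : i ≤ R) (h3 : 1 ≤ j) (h4 : j + 1 ≤ C) :
    wgridW R C X M (GV.w i j) (GV.u i (j+1)) = ((X^2*(2*R-2) : ℕ) : ℕ∞) := by
  simp only [wgridW, symW, dirWt, dirW, ENat.mul_top (hS0' hX), top_add, add_top, add_zero,
    min_top_right, min_top_left, true_and]
  rw [if_pos ⟨h1, h2, h3, h4⟩]
  first
    | (push_cast; ring1)
    | (split_ifs with hh
       · exact absurd hh (by rintro ⟨h5, -⟩; omega)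
       · simp only [ENat.mul_top (hS0' hX), min_top_right, min_top_left, add_zero]; push_cast; ring1)
    | (simp only [ENat.mul_top (hS0' hX), min_top_right, min_top_left, add_zero]; push_cast; ring1)

lemma Wwb (hX : 2 ≤ X) {i : ℕ} (h1 : 1 ≤ i) (h2 : i ≤ R) (h3 : 1 ≤ C) :
    wgridW R C X M (GV.w i C) (GV.b i) = ((X^2*(2*R-2) : ℕ) : ℕ∞) := by
  simp only [wgridW, symW, dirWt, dirW, ENat.mul_top (hS0' hX), top_add, add_top, add_zero,
    min_top_right, min_top_left, true_and]
  rw [if_pos ⟨h1, h2, h3⟩]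
  first
    | (push_cast; ring1)
    | (split_ifs with hh
       · exact absurd hh (by rintro ⟨h5, -⟩; omega)
       · simp only [ENat.mul_top (hS0' hX), min_top_right, min_top_left, add_zero]; push_cast; ring1)
    | (simp only [ENat.mul_top (hS0' hX), min_top_right, min_top_left, add_zero]; push_cast; ring1)

end WEdge

section Walks

lemma pot_le_cost {V : Type} (W : V → V → ℕ∞) (φ : V → ℕ∞)
    (h : ∀ p q, φ q ≤ φ p + W p q) :
    ∀ (l : List V) (s t : V), l.head? = some s → l.getLast? = some t →
      φ t ≤ φ s + cost W l := by
  intro l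
  induction l with
  | nil => intro s t hs ht; simp at hs
  | cons a l ih =>
    intro s t hs ht
    cases l with
    | nil =>
      simp at hs ht; subst hs; subst ht; simp [cost]
    | cons b l2 =>
      simp only [List.head?_cons, Option.some.injEq] at hs
      subst hs
      have ht' : (b :: l2).getLast? = some t := by
        rwa [List.getLast?_cons_cons] at ht
      have h1 := ih b t rfl ht'
      calc φ t ≤ φ b + cost W (b :: l2) := h1
        _ ≤ (φ a + W a b) + cost W (b :: l2) := by gcongr; exact h a b
        _ = φ a + cost W (a :: b :: l2) := by rw [cost]; ring

lemma gdist_ge {V : Type} (W : V → V → ℕ∞) (φ : V → ℕ∞)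
    (h : ∀ p q, φ q ≤ φ p + W p q) (s t : V) (hs : φ s = 0) :
    φ t ≤ gdist W s t := by
  apply le_sInf
  rintro c ⟨l, h1, h2, rfl⟩
  simpa [hs] using pot_le_cost W φ h l s t h1 h2

lemma gdist_le {V : Type} (W : V → V → ℕ∞) (s t : V) (l : List V)
    (h1 : l.head? = some s) (h2 : l.getLast? = some t) :
    gdist W s t ≤ cost W l := sInf_le ⟨l, h1, h2, rfl⟩

lemma cost_append {V : Type} (W : V → V → ℕ∞) :
    ∀ (l1 : List V) (p q : V) (l2 : List V), l1.getLast? = some p →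
      cost W (l1 ++ (q :: l2)) = cost W l1 + (W p q + cost W (q :: l2)) := by
  intro l1
  induction l1 with
  | nil => intro p q l2 h; simp at h
  | cons a l ih =>
    intro p q l2 h
    cases l with
    | nil => simp at h; subst h; simp [cost]
    | cons b l' =>
      rw [List.getLast?_cons_cons] at h
      have := ih p q l2 h
      simp only [List.cons_append] at *
      rw [cost, cost, this]
      ring

end Walks

def colPath (j : ℕ) : ℕ → List GV
  | 0 => [GV.a j]
  | i+1 => colPath j i ++ [GV.v (i+1) j, GV.u (i+1) j]

def rowTail (kk : ℕ) : ℕ → ℕ → List GV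
  | _, 0 => [GV.b kk]
  | c, t+1 => GV.u kk (c+1) :: GV.w kk (c+1) :: rowTail kk (c+1) t

lemma colPath_head (j : ℕ) : ∀ i, (colPath j i).head? = some (GV.a j) := by
  intro i
  induction i with
  | zero => rfl
  | succ i ih => rw [colPath, List.head?_append_of_ne_nil]; · exact ih
                 · intro hc; rw [hc] at ih; simp at ih

lemma colPath_last (j i : ℕ) (h : 1 ≤ i) : (colPath j i).getLast? = some (GV.u i j) := by
  obtain ⟨i', rfl⟩ : ∃ i', i = i' + 1 := ⟨i - 1, by omega⟩
  rw [colPath, show colPath j i' ++ [GV.v (i'+1) j, GV.u (i'+1) j]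
      = (colPath j i' ++ [GV.v (i'+1) j]) ++ [GV.u (i'+1) j] from by simp]
  exact List.getLast?_concat

lemma rowTail_last (kk : ℕ) : ∀ t c, (rowTail kk c t).getLast? = some (GV.b kk) := by
  intro t
  induction t with
  | zero => intro c; rfl
  | succ t ih =>
    intro c
    have hne : rowTail kk (c+1) t ≠ [] := by cases t <;> simp [rowTail]
    rw [rowTail, List.getLast?_cons_cons,
      show (GV.w kk (c+1) :: rowTail kk (c+1) t) = [GV.w kk (c+1)] ++ rowTail kk (c+1) t from rfl,
      List.getLast?_append_of_ne_nil _ hne]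
    exact ih (c+1)

section Costs
variable {R C X : ℕ} {M : ℕ → ℕ → ℕ}

lemma rowTail_cost (hX : 2 ≤ X) {kk : ℕ} (hk1 : 1 ≤ kk) (hk2 : kk ≤ R) :
    ∀ t c, 1 ≤ c → c + t = C →
    cost (wgridW R C X M) (GV.w kk c :: rowTail kk c t)
      = ((X^2*(2*R-2) + X^2*(2*R)*t : ℕ) : ℕ∞) := by
  intro t
  induction t with
  | zero =>
    intro c hc1 hc2
    have hcC : c = C := by omega
    subst hcC
    simp only [rowTail, cost]
    rw [Wwb hX hk1 hk2 (by omega)]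
    simp
  | succ t ih =>
    intro c hc1 hc2
    simp only [rowTail, cost]
    rw [Wwu hX hk1 hk2 hc1 (by omega), Wuw hX hk1 hk2 (by omega) (by omega)]
    have := ih (c+1) (by omega) (by omega)
    rw [this]
    rw [← Nat.cast_add, ← Nat.cast_add, Nat.cast_inj]
    zify [show 2 ≤ 2*R from by omega]
    ring

lemma colPath_cost (hX : 2 ≤ X) {j : ℕ} (hj1 : 1 ≤ j) (hj2 : j ≤ C) :
    ∀ i, i ≤ R → cost (wgridW R C X M) (colPath j i) = ((X^2*(2*j)*i : ℕ) : ℕ∞) := by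
  intro i
  induction i with
  | zero => intro _; simp [colPath, cost]
  | succ i ih =>
    intro hiR
    rcases Nat.eq_zero_or_pos i with hi0 | hi1
    · subst hi0
      simp only [colPath, List.nil_append, List.singleton_append, cost, zero_add]
      rw [Wav hX hj1 hj2, Wvu hX (by omega) (by omega) hj1 hj2]
      simp only [add_zero, ← Nat.cast_add, Nat.cast_inj]
      zify [show 1 ≤ 2*j from by omega]
      ring
    · rw [colPath, cost_append _ _ (GV.u i j) _ _ (colPath_last j i hi1)]
      rw [ih (by omega)]
      simp only [cost]
      rw [Wuv hX hi1 hiR hj1 hj2, Wvu hX (by omega) hiR hj1 hj2]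
      simp only [add_zero, ← Nat.cast_add, Nat.cast_inj]
      zify [show 1 ≤ 2*j from by omega]
      ring

lemma colPathv_cost (hX : 2 ≤ X) {j : ℕ} (hj1 : 1 ≤ j) (hj2 : j ≤ C)
    (i : ℕ) (hiR : i + 1 ≤ R) (l : List GV) :
    cost (wgridW R C X M) (colPath j i ++ (GV.v (i+1) j :: l))
      = ((X^2*(2*j)*i + X^2*(2*j-1) : ℕ) : ℕ∞) + cost (wgridW R C X M) (GV.v (i+1) j :: l) := by
  rcases Nat.eq_zero_or_pos i with hi0 | hi1
  · subst hi0
    rw [cost_append _ _ _ _ _ (show (colPath j 0).getLast? = some (GV.a j) from rfl),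
      colPath_cost hX hj1 hj2 0 (by omega)]
    simp only [zero_add]
    rw [Wav hX hj1 hj2, ← add_assoc, ← Nat.cast_add]
  · rw [cost_append _ _ (GV.u i j) _ _ (colPath_last j i hi1), colPath_cost hX hj1 hj2 i (by omega)]
    rw [Wuv hX hi1 hiR hj1 hj2, ← add_assoc, ← Nat.cast_add]

end Costs

lemma phi_a_val (R C X j k : ℕ) (m : ℤ) : phi R C X j k m (GV.a j) = 0 := by
  simp [phi, pot]

lemma phi_b_val (R C X j k : ℕ) (M : ℕ → ℕ → ℕ) (hR : 1 ≤ R)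
    (hj1 : 1 ≤ j) (hj2 : j ≤ C) (hk1 : 1 ≤ k) :
    phi R C X j k ((M k j : ℕ) : ℤ) (GV.b k)
      = ((X^2*(2*j*k + 2*R*(C+1-j) - 1) + M k j : ℕ) : ℕ∞) := by
  have hA : 1 ≤ 2*j*k + 2*R*(C+1-j) := by
    have h1k : 1 ≤ j*k := Nat.one_le_iff_ne_zero.2 (by positivity)
    nlinarith [h1k]
  have hpot : pot R C X j k ((M k j : ℕ) : ℤ) (GV.b k)
      = ((X^2*(2*j*k + 2*R*(C+1-j) - 1) + M k j : ℕ) : ℤ) := by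
    simp only [pot, if_pos rfl]
    push_cast [Nat.cast_sub hA, Nat.cast_sub (show j ≤ C+1 by omega)]
    ring
  simp only [phi]
  rw [hpot]
  norm_cast

theorem dist_value (R C X j k : ℕ) (M : ℕ → ℕ → ℕ) (hR : 1 ≤ R) (hC : 1 ≤ C) (hX : 2 ≤ X)
    (hj1 : 1 ≤ j) (hj2 : j ≤ C) (hk1 : 1 ≤ k) (hk2 : k ≤ R)
    (hM : ∀ i c, 1 ≤ i → i ≤ R → 1 ≤ c → c ≤ C → M i c ≤ X) :
    gdist (wgridW R C X M) (GV.a j) (GV.b k)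
      = ((X^2*(2*j*k + 2*R*(C+1-j) - 1) + M k j : ℕ) : ℕ∞) := by
  have hk' : k - 1 + 1 = k := by omega
  apply le_antisymm
  · -- upper bound via explicit path
    set tl : List GV := GV.x k j :: GV.w k j :: rowTail k j (C-j) with htl
    set P : List GV := colPath j (k-1) ++ (GV.v k j :: tl) with hP
    have hhead : P.head? = some (GV.a j) := by
      rw [hP, List.head?_append_of_ne_nil]
      · exact colPath_head j (k-1)
      · cases hh : (k-1) <;> simp [colPath]
    have hlast : P.getLast? = some (GV.b k) := by
      rw [hP, List.getLast?_append_of_ne_nil _ (by simp),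
        show (GV.v k j :: tl) = [GV.v k j, GV.x k j, GV.w k j] ++ rowTail k j (C-j) from rfl,
        List.getLast?_append_of_ne_nil _ (by cases hh : (C-j) <;> simp [rowTail])]
      exact rowTail_last k (C-j) j
    refine le_trans (gdist_le _ _ _ P hhead hlast) ?_
    have hcv : cost (wgridW R C X M) P
        = ((X^2*(2*j)*(k-1) + X^2*(2*j-1) : ℕ) : ℕ∞)
          + cost (wgridW R C X M) (GV.v k j :: tl) := by
      rw [hP]
      have := colPathv_cost (R := R) (C := C) (M := M) hX hj1 hj2 (k-1) (by omega) tl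
      rwa [hk'] at this
    rw [hcv]
    have hct : cost (wgridW R C X M) (GV.v k j :: tl)
        = ((X^2 + M k j : ℕ) : ℕ∞) + (((X^2 : ℕ) : ℕ∞)
          + ((X^2*(2*R-2) + X^2*(2*R)*(C-j) : ℕ) : ℕ∞)) := by
      rw [htl]
      show wgridW R C X M (GV.v k j) (GV.x k j)
          + (wgridW R C X M (GV.x k j) (GV.w k j)
            + cost (wgridW R C X M) (GV.w k j :: rowTail k j (C-j))) = _
      rw [Wvx hX hk1 hk2 hj1 hj2, Wxw hX hk1 hk2 hj1 hj2,
        rowTail_cost hX hk1 hk2 (C-j) j hj1 (by omega)]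
    rw [hct]
    have h1k : 1 ≤ j*k := Nat.one_le_iff_ne_zero.2 (by positivity)
    have hA : 1 ≤ 2*j*k + 2*R*(C+1-j) := by nlinarith [h1k]
    have hnat : (X^2*(2*j)*(k-1) + X^2*(2*j-1)) + ((X^2 + M k j)
        + (X^2 + (X^2*(2*R-2) + X^2*(2*R)*(C-j))))
        = X^2*(2*j*k + 2*R*(C+1-j) - 1) + M k j := by
      zify [show 1 ≤ 2*j from by omega, show 2 ≤ 2*R from by omega, hj2,
        show j ≤ C + 1 from by omega, hk1, hA]
      ring
    have hcast : ((X^2*(2*j)*(k-1) + X^2*(2*j-1) : ℕ) : ℕ∞) + (((X^2 + M k j : ℕ) : ℕ∞)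
        + (((X^2 : ℕ) : ℕ∞) + ((X^2*(2*R-2) + X^2*(2*R)*(C-j) : ℕ) : ℕ∞)))
        = ((X^2*(2*j*k + 2*R*(C+1-j) - 1) + M k j : ℕ) : ℕ∞) := by exact_mod_cast hnat
    exact le_of_eq hcast
  · -- lower bound via potential
    have hfeas := phi_feasible R C X j k M hR hC hX hj1 hj2 hk1 hk2 hM
    have hlow := gdist_ge _ _ hfeas (GV.a j) (GV.b k) (phi_a_val R C X j k _)
    rwa [phi_b_val R C X j k M hR hj1 hj2 hk1] at hlow

/-- For fixed `R, C ≥ 1` and `X ≥ 2`, the map sending an `R × C` matrix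
with integer entries in `{0, …, X}` to the array of shortest-path distances
`(d_{G_M}(a j, b k))_{1≤k≤R, 1≤j≤C}` in its weighted grid embedding is injective. -/
theorem wgrid_dist_injective (R C X : ℕ) (hR : 1 ≤ R) (hC : 1 ≤ C) (hX : 2 ≤ X)
    (M M' : ℕ → ℕ → ℕ)
    (hM : ∀ i j, 1 ≤ i → i ≤ R → 1 ≤ j → j ≤ C → M i j ≤ X)
    (hM' : ∀ i j, 1 ≤ i → i ≤ R → 1 ≤ j → j ≤ C → M' i j ≤ X)
    (hdist : ∀ k j, 1 ≤ k → k ≤ R → 1 ≤ j → j ≤ C →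
      gdist (wgridW R C X M) (GV.a j) (GV.b k) = gdist (wgridW R C X M') (GV.a j) (GV.b k)) :
    ∀ k j, 1 ≤ k → k ≤ R → 1 ≤ j → j ≤ C → M k j = M' k j := by
  intro k j hk1 hk2 hj1 hj2
  have h1 := dist_value R C X j k M hR hC hX hj1 hj2 hk1 hk2 hM
  have h2 := dist_value R C X j k M' hR hC hX hj1 hj2 hk1 hk2 hM'
  have hd := hdist k j hk1 hk2 hj1 hj2
  rw [h1, h2] at hd
  have hN : X^2*(2*j*k + 2*R*(C+1-j) - 1) + M k j
      = X^2*(2*j*k + 2*R*(C+1-j) - 1) + M' k j := by exact_mod_cast hd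
  exact Nat.add_left_cancel hN
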